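/- For a rooted binary oriented tree in which each internal vertex v is assigned a parameter p_v ∈ [0,1], and each bifurcation event at a vertex w occurs with probability equal to the product of p_v over all ancestors v of w such that w is in the left subtree of v, times the product of (1-p_v) over ancestors v with w in the right subtree of v, the probability of any particular ranking of the tree equals ∏_{j} p_{v_j}^{n_j} (1-p_{v_j})^{m_j}, where n_j and m_j are the numbers of internal vertices in the left and right subtrees of v_j; in particular this probability is independent of the ranking, so all rankings of the oriented tree are equally likely. -/

import Mathlib

/-- A rooted binary tree with ordered (left/right) children. -/
inductive OTree : Type
  | leaf : OTree
  | node : OTree → OTree → OTree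
deriving DecidableEq

/-- Number of leaves. -/
def OTree.nLeaves : OTree → ℕ
  | .leaf => 1
  | .node l r => l.nLeaves + r.nLeaves

/-- Number of internal nodes. -/
def OTree.nInt : OTree → ℕ
  | .leaf => 0
  | .node l r => l.nInt + r.nInt + 1

/-- `t.isInt p` : the path `p` (`true` = left) leads to an internal node of `t`. -/
def OTree.isInt : OTree → List Bool → Prop
  | .leaf, _ => False
  | .node _ _, [] => True
  | .node l _, true :: p => l.isInt p
  | .node _ r, false :: p => r.isInt p

/-- `t.isLf p` : the path `p` leads to a leaf of `t`. -/
def OTree.isLf : OTree → List Bool → Prop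
  | .leaf, [] => True
  | .leaf, _ :: _ => False
  | .node _ _, [] => False
  | .node l _, true :: p => l.isLf p
  | .node _ r, false :: p => r.isLf p

/-- A ranking of the internal nodes of `t`: a bijection to `{1,…,n-1}` (here `Fin t.nInt`)
which strictly increases along every root-to-leaf path. -/
structure Ranking (t : OTree) where
  rk : {p : List Bool // t.isInt p} → Fin t.nInt
  bij : Function.Bijective rk
  mono : ∀ p q : {p : List Bool // t.isInt p}, p.1 <+: q.1 → p.1 ≠ q.1 → rk p < rk q

/-- A ranked oriented tree. -/
def RankedOTree := Σ t : OTree, Ranking t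

/-- The subtree rooted at the end of path `p`. -/
def OTree.subtreeAt : OTree → List Bool → OTree
  | t, [] => t
  | .leaf, _ :: _ => .leaf
  | .node l _, true :: p => l.subtreeAt p
  | .node _ r, false :: p => r.subtreeAt p

/-- The list of internal positions of a tree. -/
def intPositions : OTree → List (List Bool)
  | .leaf => []
  | .node l r => [] :: ((intPositions l).map (true :: ·) ++ (intPositions r).map (false :: ·))

/-- The probability that a bifurcation occurs at the internal position `w`, under the CRP model
with parameters `p`: the product over proper ancestors `v` of `w` of `p v` if `w` lies in the
left subtree of `v` and of `1 - p v` otherwise. -/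
def wt (p : List Bool → ℝ) (w : List Bool) : ℝ :=
  ∏ i ∈ Finset.range w.length,
    (if w.getD i true then p (w.take i) else 1 - p (w.take i))

lemma wt_nil (p : List Bool → ℝ) : wt p [] = 1 := by simp [wt]

lemma wt_cons (p : List Bool → ℝ) (b : Bool) (w : List Bool) :
    wt p (b :: w) = (if b then p [] else 1 - p []) * wt (fun q => p (b :: q)) w := by
  unfold wt
  rw [List.length_cons, Finset.prod_range_succ']
  simp [mul_comm]

lemma length_intPositions (t : OTree) : (intPositions t).length = t.nInt := by
  induction t with
  | leaf => simp [intPositions, OTree.nInt]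
  | node l r ihl ihr =>
    simp only [intPositions, OTree.nInt, List.length_cons, List.length_append,
      List.length_map, ihl, ihr]

lemma mem_intPositions {t : OTree} {w : List Bool} : w ∈ intPositions t ↔ t.isInt w := by
  induction t generalizing w with
  | leaf => simp [intPositions, OTree.isInt]
  | node l r ihl ihr =>
    cases w with
    | nil => simp [intPositions, OTree.isInt]
    | cons b w =>
      cases b <;> simp [intPositions, OTree.isInt, ihl, ihr]

lemma nodup_intPositions (t : OTree) : (intPositions t).Nodup := by
  induction t with
  | leaf => simp [intPositions]
  | node l r ihl ihr =>
    simp only [intPositions, List.nodup_cons, List.nodup_append]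
    refine ⟨?_, ihl.map (by intro a b h; simpa using h), ihr.map (by intro a b h; simpa using h), ?_⟩
    · simp
    · intro a ha b hb
      simp only [List.mem_map] at ha hb
      obtain ⟨x, _, hx⟩ := ha
      obtain ⟨y, _, hy⟩ := hb
      subst hx hy; simp

lemma prod_map_cons_wt (p : List Bool → ℝ) (b : Bool) (L : List (List Bool)) :
    (L.map (wt p ∘ (b :: ·))).prod
      = (if b then p [] else 1 - p []) ^ L.length * (L.map (wt (fun q => p (b :: q)))).prod := by
  induction L with
  | nil => simp
  | cons a L ih =>
    simp only [List.map_cons, List.prod_cons, Function.comp_apply, wt_cons, ih,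
      List.length_cons, pow_succ]
    ring

lemma prod_wt (t : OTree) (p : List Bool → ℝ) :
    ((intPositions t).map (wt p)).prod
      = ((intPositions t).map fun v =>
          p v ^ (t.subtreeAt (v ++ [true])).nInt
            * (1 - p v) ^ (t.subtreeAt (v ++ [false])).nInt).prod := by
  induction t generalizing p with
  | leaf => simp [intPositions]
  | node l r ihl ihr =>
    have hmapL : (intPositions l).map
        ((fun v => p v ^ ((OTree.node l r).subtreeAt (v ++ [true])).nInt
            * (1 - p v) ^ ((OTree.node l r).subtreeAt (v ++ [false])).nInt) ∘ (true :: ·))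
      = (intPositions l).map (fun v => (fun q => p (true :: q)) v ^ (l.subtreeAt (v ++ [true])).nInt
            * (1 - (fun q => p (true :: q)) v) ^ (l.subtreeAt (v ++ [false])).nInt) := by
      apply List.map_congr_left; intro v _
      simp [Function.comp, OTree.subtreeAt, List.cons_append]
    have hmapR : (intPositions r).map
        ((fun v => p v ^ ((OTree.node l r).subtreeAt (v ++ [true])).nInt
            * (1 - p v) ^ ((OTree.node l r).subtreeAt (v ++ [false])).nInt) ∘ (false :: ·))
      = (intPositions r).map (fun v => (fun q => p (false :: q)) v ^ (r.subtreeAt (v ++ [true])).nInt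
            * (1 - (fun q => p (false :: q)) v) ^ (r.subtreeAt (v ++ [false])).nInt) := by
      apply List.map_congr_left; intro v _
      simp [Function.comp, OTree.subtreeAt, List.cons_append]
    simp only [intPositions, List.map_cons, List.map_append, List.prod_cons, List.prod_append,
      List.map_map]
    rw [hmapL, hmapR, ← ihl, ← ihr, prod_map_cons_wt, prod_map_cons_wt, wt_nil,
      length_intPositions, length_intPositions]
    have h1 : (OTree.node l r).subtreeAt ([] ++ [true]) = l := by simp [OTree.subtreeAt]
    have h2 : (OTree.node l r).subtreeAt ([] ++ [false]) = r := by simp [OTree.subtreeAt]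
    rw [h1, h2]
    simp only [if_true, if_pos, Bool.false_eq_true, if_false]
    ring

/-- under the CRP model with parameters p_v ∈ [0,1], the probability of any
ranking of an oriented tree — the product, in rank (time) order, of the probabilities of its
bifurcation events — equals ∏_v p_v^{n_v} (1-p_v)^{m_v}, where n_v and m_v are the numbers of
internal vertices in the left and right subtrees of v; in particular it does not depend on the
ranking, so all rankings are equally likely. -/
theorem stmt13 (t : OTree) (p : List Bool → ℝ) (hp : ∀ q, p q ∈ Set.Icc (0 : ℝ) 1)
    (rk : Ranking t) :
    ∏ k : Fin t.nInt, wt p (Function.surjInv rk.bij.surjective k).1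
      = ((intPositions t).map fun v =>
          p v ^ (t.subtreeAt (v ++ [true])).nInt
            * (1 - p v) ^ (t.subtreeAt (v ++ [false])).nInt).prod := by
  classical
  set g := Function.surjInv rk.bij.surjective with hg
  have hgr : ∀ k, rk.rk (g k) = k := Function.rightInverse_surjInv rk.bij.surjective
  rw [← prod_wt]
  rw [← List.prod_toFinset _ (nodup_intPositions t)]
  refine Finset.prod_bij (fun k _ => (g k).1) ?_ ?_ ?_ ?_
  · intro k _
    exact List.mem_toFinset.mpr (mem_intPositions.mpr (g k).2)
  · intro k1 _ k2 _ h
    have : g k1 = g k2 := Subtype.ext h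
    have := congrArg rk.rk this
    rwa [hgr, hgr] at this
  · intro w hw
    have hwi : t.isInt w := mem_intPositions.mp (List.mem_toFinset.mp hw)
    exact ⟨rk.rk ⟨w, hwi⟩, Finset.mem_univ _,
      congrArg Subtype.val (rk.bij.injective (hgr (rk.rk ⟨w, hwi⟩)))⟩
  · intro k _; rfl
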